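/- Let X : SimpleGraph V be a simple graph and let a group G act on V by automorphisms of X. Assume the action is proper: for every γ ∈ G with γ ≠ 1 and every vertex v, every walk in X from v to γ • v has length at least 4. Let k be a natural number and v : Fin k → V a family of vertices whose orbits are pairwise distinct (for a ≠ b there is no γ ∈ G with γ • v a = v b) and pairwise orbit-adjacent (for all a ≠ b there exist γ, δ ∈ G with X.Adj (γ • v a) (δ • v b)). Then there exists a family w : Fin k → V with w a in the orbit of v a for every a (∃ γ, w a = γ • v a) such that X.Adj (w a) (w b) for all a ≠ b, i.e. the orbit classes lift to a clique in X. -/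
import Mathlib


/-- If a group acts properly on a graph (every nontrivial element moves every vertex to
distance at least 4), then any family of vertices in pairwise distinct, pairwise adjacent
orbits lifts to a clique: one can choose representatives that are pairwise adjacent. -/
theorem proper_action_orbit_clique_lifts
    (V G : Type*) [Group G] [MulAction G V] (X : SimpleGraph V)
    (hadj : ∀ (γ : G) (u v : V), X.Adj u v → X.Adj (γ • u) (γ • v))
    (hproper : ∀ γ : G, γ ≠ 1 → ∀ (v : V) (w : X.Walk v (γ • v)), 4 ≤ w.length)
    (k : ℕ) (v : Fin k → V)
    (hdistinct : ∀ a b : Fin k, a ≠ b → ∀ γ : G, γ • v a ≠ v b)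
    (horbadj : ∀ a b : Fin k, a ≠ b → ∃ γ δ : G, X.Adj (γ • v a) (δ • v b)) :
    ∃ w : Fin k → V, (∀ a : Fin k, ∃ γ : G, w a = γ • v a) ∧
      ∀ a b : Fin k, a ≠ b → X.Adj (w a) (w b) := by
  classical
  obtain _ | k := k
  · exact ⟨v, fun a => ⟨1, (one_smul G (v a)).symm⟩, fun a => a.elim0⟩
  set a0 : Fin (k + 1) := 0 with ha0
  have hsel : ∀ a : Fin (k + 1), a ≠ a0 → ∃ γ : G, X.Adj (v a0) (γ • v a) := by
    intro a ha
    obtain ⟨α, β, hαβ⟩ := horbadj a0 a (Ne.symm ha)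
    refine ⟨α⁻¹ * β, ?_⟩
    have := hadj α⁻¹ _ _ hαβ
    simpa [mul_smul] using this
  choose γf hγf using hsel
  have key : ∀ (a b : Fin (k + 1)) (ha : a ≠ a0) (hb : b ≠ a0), a ≠ b →
      X.Adj (γf a ha • v a) (γf b hb • v b) := by
    intro a b ha hb hab
    obtain ⟨α, β, hαβ⟩ := horbadj a b hab
    have hδ : X.Adj (γf a ha • v a) ((γf a ha * α⁻¹ * β) • v b) := by
      have := hadj (γf a ha * α⁻¹) _ _ hαβ
      simpa [mul_smul] using this
    set δ := γf a ha * α⁻¹ * β with hδdef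
    by_cases hcase : δ = γf b hb
    · rwa [hcase] at hδ
    · exfalso
      have e1 : X.Adj ((γf b hb)⁻¹ • (γf b hb • v b)) ((γf b hb)⁻¹ • v a0) :=
        hadj _ _ _ (hγf b hb).symm
      have e2 : X.Adj ((γf b hb)⁻¹ • v a0) ((γf b hb)⁻¹ • (γf a ha • v a)) :=
        hadj _ _ _ (hγf a ha)
      have e3 : X.Adj ((γf b hb)⁻¹ • (γf a ha • v a)) ((γf b hb)⁻¹ • (δ • v b)) :=
        hadj _ _ _ hδ
      rw [inv_smul_smul] at e1
      have hne : (γf b hb)⁻¹ * δ ≠ 1 := fun h => hcase (inv_mul_eq_one.mp h).symm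
      have h4 := hproper _ hne (v b)
        (((SimpleGraph.Walk.cons e1 (SimpleGraph.Walk.cons e2
          (SimpleGraph.Walk.cons e3 SimpleGraph.Walk.nil)))).copy rfl
          (mul_smul _ _ _).symm)
      rw [SimpleGraph.Walk.length_copy] at h4
      simp at h4
  refine ⟨fun a => if h : a = a0 then v a0 else γf a h • v a, ?_, ?_⟩
  · intro a
    by_cases h : a = a0
    · exact ⟨1, by simp [h]⟩
    · exact ⟨γf a h, by simp [h]⟩
  · intro a b hab
    by_cases h1 : a = a0 <;> by_cases h2 : b = a0
    · exact absurd (h1.trans h2.symm) hab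
    · simpa [h1, h2] using hγf b h2
    · simpa [h1, h2] using (hγf a h1).symm
    · simpa [h1, h2] using key a b h1 h2 hab
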